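/- Let b ≥ 2 be an integer and z ∈ ℂ \ ℝ. The set {z, z̄} is exponentially b-nonresonant if and only if (Re z)·π/((Im z)·ln b) is irrational. -/

import Mathlib

open MeasureTheory Filter Set
open scoped Classical

/-- Base-`b` significand: `S_b(x) ∈ [1,b)` with `|x| = S_b(x)·b^k`; `S_b(0)=0`. -/
noncomputable def significand (b : ℕ) (x : ℝ) : ℝ :=
  if x = 0 then 0 else |x| / (b : ℝ) ^ (Int.log b |x|)

/-- `f` is `b`-Benford. -/
noncomputable def IsBenford (b : ℕ) (f : ℝ → ℝ) : Prop :=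
  ∀ s : ℝ, 1 ≤ s → s < (b : ℝ) →
    Tendsto (fun T : ℝ =>
        (volume {t : ℝ | 0 ≤ t ∧ t ≤ T ∧ significand b (f t) ≤ s}).toReal / T)
      atTop (nhds (Real.logb b s))

/-- A subset of the circle `ℝ/ℤ` is an arc if it is the image of an interval. -/
def IsArc (J : Set UnitAddCircle) : Prop :=
  ∃ a c : ℝ, J = (fun x : ℝ => (x : UnitAddCircle)) '' Set.Ico a c

/-- `f` is continuously uniformly distributed mod 1. -/
noncomputable def CUDMod1 (f : ℝ → ℝ) : Prop :=
  ∀ J : Set UnitAddCircle, IsArc J →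
    Tendsto (fun T : ℝ =>
        (volume {t : ℝ | 0 ≤ t ∧ t ≤ T ∧ ((f t : UnitAddCircle) ∈ J)}).toReal / T)
      atTop (nhds ((volume J).toReal))

/-- A sequence (indexed from 1) is uniformly distributed mod 1. -/
noncomputable def UDMod1 (x : ℕ → ℝ) : Prop :=
  ∀ J : Set UnitAddCircle, IsArc J →
    Tendsto (fun N : ℕ =>
        ((Finset.Icc 1 N).filter (fun n => ((x n : UnitAddCircle) ∈ J))).card / (N : ℝ))
      atTop (nhds ((volume J).toReal))

/-- The set `Δ_W` associated with `W ⊆ ℂ`. -/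
noncomputable def deltaSet (W : Set ℂ) : Set ℝ :=
  {x | ∃ z ∈ W, ∃ w ∈ W, x = 1 + (Complex.arg z - Complex.arg w) / (2 * Real.pi)}

/-- `W ⊆ ℂ` is `b`-nonresonant. -/
noncomputable def BNonresonant (b : ℕ) (W : Set ℂ) : Prop :=
  ∀ r : ℝ, 0 < r → (W ∩ {z | ‖z‖ = r}).Nonempty →
    (deltaSet (W ∩ {z | ‖z‖ = r}) ∩ Set.range ((↑) : ℚ → ℝ) = {1}) ∧
    Real.logb b r ∉ Submodule.span ℚ (deltaSet (W ∩ {z | ‖z‖ = r}))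

/-- `Z ⊆ ℂ` is exponentially `b`-nonresonant. -/
noncomputable def ExpBNonresonant (b : ℕ) (Z : Set ℂ) : Prop :=
  ∃ t : ℝ, 0 ≤ t ∧ BNonresonant b ((fun z => Complex.exp (t * z)) '' Z)

/-- The spectrum (set of complex eigenvalues) of a real square matrix. -/
noncomputable def realSpectrum {d : ℕ} (A : Matrix (Fin d) (Fin d) ℝ) : Set ℂ :=
  spectrum ℂ (A.map (algebraMap ℝ ℂ))

/-- for non-real `z`, `{z, z̄}` is exponentially `b`-nonresonant iff
`Re z · π / (Im z · ln b)` is irrational. -/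
lemma arg_exp_sub (w : ℂ) : ∃ k : ℤ, (Complex.exp w).arg = w.im + 2 * Real.pi * k := by
  refine ⟨⌊(Real.pi - w.im) / (2 * Real.pi)⌋, ?_⟩
  have h1 : Complex.exp w = (Real.exp w.re : ℂ) * Complex.exp (w.im * Complex.I) := by
    rw [Complex.ofReal_exp, ← Complex.exp_add]
    congr 1
    exact (Complex.re_add_im w).symm
  rw [h1, Complex.arg_real_mul _ (Real.exp_pos _), Complex.exp_mul_I]
  have := Complex.arg_cos_add_sin_mul_I_sub w.im
  linarith

lemma deltaSet_pair (u v : ℂ) :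
    deltaSet {u, v} = {1, 1 + (u.arg - v.arg) / (2 * Real.pi),
      1 + (v.arg - u.arg) / (2 * Real.pi)} := by
  ext x
  simp only [deltaSet, mem_insert_iff, mem_singleton_iff, mem_setOf_eq]
  constructor
  · rintro ⟨p, (rfl | rfl), q, (rfl | rfl), rfl⟩ <;> simp
  · rintro (rfl | rfl | rfl)
    · exact ⟨u, Or.inl rfl, u, Or.inl rfl, by simp⟩
    · exact ⟨u, Or.inl rfl, v, Or.inr rfl, rfl⟩
    · exact ⟨v, Or.inr rfl, u, Or.inl rfl, rfl⟩

lemma bNonresonant_circle {b : ℕ} {W : Set ℂ} {R : ℝ} (hR : 0 < R)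
    (hWc : ∀ u ∈ W, ‖u‖ = R) (hne : W.Nonempty) :
    BNonresonant b W ↔
      (deltaSet W ∩ Set.range ((↑) : ℚ → ℝ) = {1}) ∧
      Real.logb b R ∉ Submodule.span ℚ (deltaSet W) := by
  have hinter : W ∩ {z | ‖z‖ = R} = W :=
    inter_eq_left.mpr fun u hu => hWc u hu
  constructor
  · intro h
    have := h R hR (by rw [hinter]; exact hne)
    rwa [hinter] at this
  · rintro ⟨h1, h2⟩ r hr hne'
    obtain ⟨u, huW, huC⟩ := hne'
    have : r = R := by rw [← huC]; exact hWc u huW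
    subst this
    rw [hinter]
    exact ⟨h1, h2⟩

lemma image_exp_pair (t : ℝ) (z : ℂ) :
    (fun u => Complex.exp (t * u)) '' {z, (starRingEnd ℂ) z} =
      {Complex.exp (t * z), (starRingEnd ℂ) (Complex.exp (t * z))} := by
  rw [Set.image_pair]
  congr 1
  rw [← Complex.exp_conj, map_mul, Complex.conj_ofReal]

theorem expNonresonant_pair_iff (b : ℕ) (hb : 2 ≤ b) (z : ℂ) (hz : z.im ≠ 0) :
    ExpBNonresonant b {z, (starRingEnd ℂ) z} ↔
      Irrational (z.re * Real.pi / (z.im * Real.log b)) := by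
  have hπ : Real.pi ≠ 0 := Real.pi_ne_zero
  have hπ0 : (0:ℝ) < Real.pi := Real.pi_pos
  have hlb : 0 < Real.log b := Real.log_pos (by exact_mod_cast hb)
  constructor
  · rintro ⟨t, ht0, hB⟩
    by_contra hcon
    obtain ⟨q, hq⟩ := not_not.mp hcon
    set w := Complex.exp ((t:ℂ) * z) with hw
    have habs : ∀ u ∈ ({w, (starRingEnd ℂ) w} : Set ℂ), ‖u‖ = Real.exp (t * z.re) := by
      rintro u (rfl | rfl)
      · rw [Complex.norm_exp]; congr 1; simp
      · rw [Complex.norm_conj, Complex.norm_exp]; congr 1; simp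
    rw [image_exp_pair, bNonresonant_circle (Real.exp_pos _) habs ⟨w, Or.inl rfl⟩] at hB
    obtain ⟨h1, h2⟩ := hB
    apply h2
    have hlogb : Real.logb b (Real.exp (t * z.re)) = t * z.re / Real.log b := by
      rw [Real.logb, Real.log_exp]
    rw [hlogb]
    obtain ⟨k, hk⟩ := arg_exp_sub ((t:ℂ) * z)
    rw [show ((t:ℂ) * z).im = t * z.im by simp, ← hw] at hk
    have hone : (1:ℝ) ∈ deltaSet {w, (starRingEnd ℂ) w} :=
      ⟨w, Or.inl rfl, w, Or.inl rfl, by simp⟩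
    have hq' : (q:ℝ) * (z.im * Real.log b) = z.re * Real.pi := by
      field_simp at hq
      linarith
    by_cases hpi : w.arg = Real.pi
    · rw [hpi] at hk
      have h2' : t * z.im = Real.pi * (1 - 2 * k) := by linarith
      have key : t * z.re * Real.pi = (q:ℝ) * (1 - 2 * k) * Real.log b * Real.pi := by
        linear_combination (-t) * hq' + ((q:ℝ) * Real.log b) * h2'
      have key2 : t * z.re = (q:ℝ) * (1 - 2 * k) * Real.log b := mul_right_cancel₀ hπ key
      have hval : t * z.re / Real.log b = ((q * (1 - 2 * k) : ℚ) : ℝ) * 1 := by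
        push_cast
        rw [key2, mul_div_assoc, div_self hlb.ne']
      rw [hval, ← Rat.smul_def]
      exact Submodule.smul_mem _ _ (Submodule.subset_span hone)
    · have harg : ((starRingEnd ℂ) w).arg = -w.arg := by
        rw [Complex.arg_conj, if_neg hpi]
      have hmem2 : 1 + (w.arg - ((starRingEnd ℂ) w).arg) / (2 * Real.pi) ∈
          deltaSet {w, (starRingEnd ℂ) w} :=
        ⟨w, Or.inl rfl, (starRingEnd ℂ) w, Or.inr rfl, rfl⟩
      have hu : w.arg / Real.pi ∈ Submodule.span ℚ (deltaSet {w, (starRingEnd ℂ) w}) := by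
        have he : w.arg / Real.pi =
            (1 + (w.arg - ((starRingEnd ℂ) w).arg) / (2 * Real.pi)) - 1 := by
          rw [harg]; field_simp; ring
        rw [he]
        exact sub_mem (Submodule.subset_span hmem2) (Submodule.subset_span hone)
      have key2 : t * z.re / Real.log b = (q:ℝ) * (t * z.im) / Real.pi := by
        rw [div_eq_div_iff hlb.ne' hπ]
        linear_combination (-t) * hq'
      have hval : t * z.re / Real.log b =
          (q:ℝ) * (w.arg / Real.pi) + (((-2) * k * q : ℚ) : ℝ) * 1 := by
        push_cast
        rw [hk, key2]
        field_simp
        ring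
      rw [hval, ← Rat.smul_def, ← Rat.smul_def]
      exact add_mem (Submodule.smul_mem _ _ hu) (Submodule.smul_mem _ _ (Submodule.subset_span hone))
  · intro hirr
    obtain ⟨t, ht, htbad⟩ :
        ∃ t : ℝ, 0 < t ∧ t ∉ (Set.range (fun q : ℚ => (q : ℝ) * Real.pi / z.im) ∪
          Set.range (fun pq : ℚ × ℚ =>
            (pq.1 : ℝ) / (z.re / Real.log b - (pq.2 : ℝ) * z.im / Real.pi))) := by
      by_contra hcon
      push_neg at hcon
      have hsub : Set.Ioi (0:ℝ) ⊆ (Set.range (fun q : ℚ => (q : ℝ) * Real.pi / z.im) ∪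
          Set.range (fun pq : ℚ × ℚ =>
            (pq.1 : ℝ) / (z.re / Real.log b - (pq.2 : ℝ) * z.im / Real.pi))) :=
        fun x hx => hcon x hx
      have hc : ((Set.range (fun q : ℚ => (q : ℝ) * Real.pi / z.im) ∪
          Set.range (fun pq : ℚ × ℚ =>
            (pq.1 : ℝ) / (z.re / Real.log b - (pq.2 : ℝ) * z.im / Real.pi)))).Countable :=
        (Set.countable_range _).union (Set.countable_range _)
      have h1 := MeasureTheory.measure_mono (μ := MeasureTheory.volume) hsub
      rw [Real.volume_Ioi, hc.measure_zero MeasureTheory.volume] at h1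
      simp at h1
    have hf1 : ∀ q : ℚ, t * z.im / Real.pi ≠ (q : ℝ) := by
      intro q hq
      apply htbad
      left
      refine ⟨q, ?_⟩
      show (q : ℝ) * Real.pi / z.im = t
      rw [div_eq_iff hπ] at hq
      rw [div_eq_iff hz]
      linarith
    have hf2 : ∀ p q : ℚ, t * z.re / Real.log b ≠ (p : ℝ) + (q : ℝ) * (t * z.im / Real.pi) := by
      intro p q heq
      have hd : z.re / Real.log b - (q : ℝ) * z.im / Real.pi ≠ 0 := by
        intro h0
        apply hirr
        refine ⟨q, ?_⟩
        have h0' : z.re * Real.pi = (q : ℝ) * z.im * Real.log b := by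
          rw [sub_eq_zero, div_eq_div_iff hlb.ne' hπ] at h0
          linarith
        rw [eq_div_iff (by exact mul_ne_zero hz hlb.ne')]
        linarith
      apply htbad
      right
      refine ⟨(p, q), ?_⟩
      show (p : ℝ) / (z.re / Real.log b - (q : ℝ) * z.im / Real.pi) = t
      rw [div_eq_iff hd]
      linear_combination (-1 : ℝ) * heq
    refine ⟨t, ht.le, ?_⟩
    rw [image_exp_pair]
    set w := Complex.exp ((t:ℂ) * z) with hw
    have habs : ∀ u ∈ ({w, (starRingEnd ℂ) w} : Set ℂ), ‖u‖ = Real.exp (t * z.re) := by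
      rintro u (rfl | rfl)
      · rw [Complex.norm_exp]; congr 1; simp
      · rw [Complex.norm_conj, Complex.norm_exp]; congr 1; simp
    rw [bNonresonant_circle (Real.exp_pos _) habs ⟨w, Or.inl rfl⟩]
    have hwim : w.im ≠ 0 := by
      rw [hw, Complex.exp_im, show ((t:ℂ) * z).im = t * z.im by simp,
        show ((t:ℂ) * z).re = t * z.re by simp]
      intro h
      rcases mul_eq_zero.mp h with h | h
      · exact (Real.exp_pos _).ne' h
      · obtain ⟨n, hn⟩ := Real.sin_eq_zero_iff.mp h
        apply hf1 n
        push_cast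
        rw [← hn, mul_div_assoc, div_self hπ, mul_one]
    have hpi : w.arg ≠ Real.pi := fun h => hwim (Complex.arg_eq_pi_iff.mp h).2
    have harg : ((starRingEnd ℂ) w).arg = -w.arg := by rw [Complex.arg_conj, if_neg hpi]
    obtain ⟨k, hk⟩ := arg_exp_sub ((t:ℂ) * z)
    rw [show ((t:ℂ) * z).im = t * z.im by simp, ← hw] at hk
    have hlogb : Real.logb b (Real.exp (t * z.re)) = t * z.re / Real.log b := by
      rw [Real.logb, Real.log_exp]
    rw [deltaSet_pair, harg, hlogb]
    have hirru : ∀ q : ℚ, w.arg / Real.pi ≠ (q : ℝ) := by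
      intro q h
      apply hf1 (q - 2 * k)
      push_cast
      rw [div_eq_iff hπ] at h ⊢
      linear_combination h - hk
    constructor
    · ext x
      simp only [mem_inter_iff, mem_insert_iff, mem_singleton_iff, Set.mem_range]
      constructor
      · rintro ⟨hx, q, hqx⟩
        rcases hx with rfl | rfl | rfl
        · rfl
        · exfalso
          apply hirru (q - 1)
          push_cast
          rw [div_eq_iff hπ]
          have h3 : (w.arg - -w.arg) / (2 * Real.pi) = (q : ℝ) - 1 := by linarith
          rw [div_eq_iff (by positivity : (2:ℝ) * Real.pi ≠ 0)] at h3
          linear_combination h3 / 2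
        · exfalso
          apply hirru (1 - q)
          push_cast
          rw [div_eq_iff hπ]
          have h3 : (-w.arg - w.arg) / (2 * Real.pi) = (q : ℝ) - 1 := by linarith
          rw [div_eq_iff (by positivity : (2:ℝ) * Real.pi ≠ 0)] at h3
          linear_combination -h3 / 2
      · rintro rfl
        exact ⟨Or.inl rfl, 1, by norm_num⟩
    · intro hmem
      have hsub2 : Submodule.span ℚ ({1, 1 + (w.arg - -w.arg) / (2 * Real.pi),
          1 + (-w.arg - w.arg) / (2 * Real.pi)} : Set ℝ) ≤
          Submodule.span ℚ {(1:ℝ), w.arg / Real.pi} := by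
        rw [Submodule.span_le]
        rintro x (rfl | rfl | rfl)
        · exact Submodule.subset_span (Or.inl rfl)
        · refine SetLike.mem_coe.mpr (Submodule.mem_span_pair.mpr ⟨1, 1, ?_⟩)
          rw [Rat.smul_def, Rat.smul_def]
          push_cast
          field_simp
          ring
        · refine SetLike.mem_coe.mpr (Submodule.mem_span_pair.mpr ⟨1, -1, ?_⟩)
          rw [Rat.smul_def, Rat.smul_def]
          push_cast
          field_simp
          ring
      obtain ⟨p, q, hpq⟩ := Submodule.mem_span_pair.mp (hsub2 hmem)
      rw [Rat.smul_def, Rat.smul_def] at hpq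
      apply hf2 (p + 2 * k * q) q
      push_cast
      rw [← hpq, hk]
      field_simp
      ring
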